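/- Let C̲_n ∈ ℤ⟨x₀,x₁⟩ be defined by C̲_0 = 1 and C̲_{n+1} = Σ_{k=0}^{n} C̲_k x₀ C̲_{n−k} x₁. Then each C̲_n is invariant under the anti-automorphism of ℤ⟨x₀,x₁⟩ that interchanges x₀ and x₁ (and reverses order of multiplication). -/
import Mathlib

noncomputable abbrev x₀ : FreeAlgebra ℤ (Fin 2) := FreeAlgebra.ι ℤ 0
noncomputable abbrev x₁ : FreeAlgebra ℤ (Fin 2) := FreeAlgebra.ι ℤ 1

/-- The anti-automorphism interchanging `x₀` and `x₁`, encoded as an algebra map into the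
multiplicative opposite. -/
noncomputable abbrev τ : FreeAlgebra ℤ (Fin 2) →ₐ[ℤ] (FreeAlgebra ℤ (Fin 2))ᵐᵒᵖ :=
  FreeAlgebra.lift ℤ (fun i : Fin 2 =>
    MulOpposite.op (FreeAlgebra.ι ℤ (if i = 0 then 1 else 0)))

/-- Triangle sum swap: summing `f j m` over pairs with `j + m < n`, two ways. -/
lemma triangle_swap {A : Type*} [AddCommMonoid A] (f : ℕ → ℕ → A) :
    ∀ n, ∑ k ∈ Finset.range n, ∑ j ∈ Finset.range (k + 1), f j (k - j)
      = ∑ j ∈ Finset.range n, ∑ m ∈ Finset.range (n - j), f j m := by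
  intro n
  induction n with
  | zero => simp
  | succ n ih =>
    have h2 : ∀ j ∈ Finset.range n, ∑ m ∈ Finset.range (n + 1 - j), f j m
        = (∑ m ∈ Finset.range (n - j), f j m) + f j (n - j) := by
      intro j hj
      rw [Finset.mem_range] at hj
      have : n + 1 - j = (n - j) + 1 := by omega
      rw [this, Finset.sum_range_succ]
    rw [Finset.sum_range_succ, ih,
      Finset.sum_range_succ (fun j => ∑ m ∈ Finset.range (n + 1 - j), f j m) n,
      Finset.sum_congr rfl h2, Finset.sum_range_succ, Finset.sum_add_distrib]
    simp [Nat.sub_self]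
    abel

lemma second_rec (C : ℕ → FreeAlgebra ℤ (Fin 2))
    (h0 : C 0 = 1)
    (hrec : ∀ n, C (n + 1) = ∑ k ∈ Finset.range (n + 1), C k * x₀ * C (n - k) * x₁) :
    ∀ n, C (n + 1) = ∑ k ∈ Finset.range (n + 1), x₀ * C k * x₁ * C (n - k) := by
  intro n
  induction n using Nat.strong_induction_on with
  | _ n ih =>
    rw [hrec n, Finset.sum_range_succ', h0, one_mul]
    have step : ∀ k ∈ Finset.range n, C (k + 1) * x₀ * C (n - (k + 1)) * x₁
        = ∑ j ∈ Finset.range (k + 1), x₀ * C j * x₁ * (C (k - j) * x₀ * C (n - (k+1)) * x₁) := by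
      intro k hk
      rw [Finset.mem_range] at hk
      rw [ih k hk, Finset.sum_mul, Finset.sum_mul, Finset.sum_mul]
      exact Finset.sum_congr rfl (fun j _ => by simp only [mul_assoc])
    rw [Finset.sum_congr rfl step]
    have tri := triangle_swap (fun j m => x₀ * C j * x₁ * (C m * x₀ * (C (n - 1 - (j + m))) * x₁)) n
    have eq1 : ∀ k ∈ Finset.range n,
        (∑ j ∈ Finset.range (k + 1), x₀ * C j * x₁ * (C (k - j) * x₀ * C (n - (k+1)) * x₁))
        = ∑ j ∈ Finset.range (k + 1), x₀ * C j * x₁ * (C (k - j) * x₀ * (C (n - 1 - (j + (k - j)))) * x₁) := by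
      intro k hk
      rw [Finset.mem_range] at hk
      refine Finset.sum_congr rfl fun j hj => ?_
      rw [Finset.mem_range] at hj
      have hidx : n - 1 - (j + (k - j)) = n - (k + 1) := by omega
      rw [hidx]
    rw [Finset.sum_congr rfl eq1, tri]
    have eq2 : ∀ j ∈ Finset.range n,
        (∑ m ∈ Finset.range (n - j), x₀ * C j * x₁ * (C m * x₀ * (C (n - 1 - (j + m))) * x₁))
        = x₀ * C j * x₁ * C (n - j) := by
      intro j hj
      rw [Finset.mem_range] at hj
      rw [← Finset.mul_sum]
      congr 1
      have hnj : n - j = (n - j - 1) + 1 := by omega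
      rw [hnj, hrec (n - j - 1)]
      refine Finset.sum_congr rfl fun m hm => ?_
      rw [Finset.mem_range] at hm
      have hidx : n - 1 - (j + m) = n - j - 1 - m := by omega
      rw [hidx]
    rw [Finset.sum_congr rfl eq2, Finset.sum_range_succ, Nat.sub_self, h0, mul_one]
    simp

theorem underline_catalan_anti_invariant (C : ℕ → FreeAlgebra ℤ (Fin 2))
    (h0 : C 0 = 1)
    (hrec : ∀ n, C (n + 1) = ∑ k ∈ Finset.range (n + 1), C k * x₀ * C (n - k) * x₁) :
    ∀ n, τ (C n) = MulOpposite.op (C n) := by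
  intro n
  induction n using Nat.strong_induction_on with
  | _ n ih =>
    match n with
    | 0 => rw [h0]; simp
    | n + 1 =>
      rw [hrec n, map_sum]
      have hτ0 : τ x₀ = MulOpposite.op x₁ := by simp [FreeAlgebra.lift_ι_apply]
      have hτ1 : τ x₁ = MulOpposite.op x₀ := by simp [FreeAlgebra.lift_ι_apply]
      have term : ∀ k ∈ Finset.range (n + 1),
          τ (C k * x₀ * C (n - k) * x₁)
          = MulOpposite.op (x₀ * C (n - k) * x₁ * C k) := by
        intro k hk
        rw [Finset.mem_range] at hk
        rw [map_mul, map_mul, map_mul, hτ0, hτ1, ih k (by omega), ih (n - k) (by omega)]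
        simp [← MulOpposite.op_mul, mul_assoc]
      rw [Finset.sum_congr rfl term, ← Finset.op_sum]
      congr 1
      rw [← hrec n, second_rec C h0 hrec n,
        ← Finset.sum_range_reflect (fun j => x₀ * C j * x₁ * C (n - j)) (n + 1)]
      refine Finset.sum_congr rfl fun j hj => ?_
      rw [Finset.mem_range] at hj
      have h1 : n + 1 - 1 - j = n - j := by omega
      have h2 : n - (n - j) = j := by omega
      rw [h1, h2]
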